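/- Let n ≥ 1, let M and N be connected topological n-manifolds, each equipped with a metric (d_M and d_N respectively) inducing its topology, and let f : M → N be a branched cover. Then for every x ∈ M there exists r_x > 0 such that for all 0 < r < r_x, the set U_f(x, r) is a precompact normal neighborhood of x; that is: the closure of U_f(x,r) in M is compact, f(∂U_f(x,r)) = ∂(f(U_f(x,r))), and U_f(x,r) ∩ f⁻¹{f(x)} = {x}. -/

import Mathlib

open Metric Set Filter Topology

/-- A topological `n`-manifold structure on a space: every point has an open
neighborhood homeomorphic to `ℝⁿ` (Hausdorffness and second countability are
carried as typeclass assumptions). -/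
def IsTopNManifold (n : ℕ) (M : Type*) [TopologicalSpace M] : Prop :=
  ∀ x : M, ∃ U : Set M, IsOpen U ∧ x ∈ U ∧
    Nonempty (U ≃ₜ EuclideanSpace ℝ (Fin n))

/-- A branched cover: a continuous, open, discrete map. Discreteness means that
no fiber `f⁻¹{y}` has an accumulation point. -/
def IsBranchedCover {M N : Type*} [TopologicalSpace M] [TopologicalSpace N]
    (f : M → N) : Prop :=
  Continuous f ∧ IsOpenMap f ∧
    ∀ y : N, ∀ x : M, ¬ AccPt x (Filter.principal (f ⁻¹' {y}))

/-- `U_f(x, r)`: the connected component of `x` in `f⁻¹(B(f(x), r))`. -/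
def normalComp {M N : Type*} [MetricSpace M] [MetricSpace N]
    (f : M → N) (x : M) (r : ℝ) : Set M :=
  connectedComponentIn (f ⁻¹' Metric.ball (f x) r) x

/-- In a topological `n`-manifold, every neighborhood of a point contains a compact
set which in turn contains an open connected neighborhood of the point. -/
lemma IsTopNManifold.exists_compact_connected_nbhd {n : ℕ} {M : Type*} [TopologicalSpace M]
    (hM : IsTopNManifold n M) (x : M) {T : Set M} (hT : T ∈ 𝓝 x) :
    ∃ K V : Set M, IsCompact K ∧ K ⊆ T ∧ IsOpen V ∧ x ∈ V ∧ IsConnected V ∧ V ⊆ K := by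
  obtain ⟨W, hWo, hxW, ⟨e⟩⟩ := hM x
  set φ : EuclideanSpace ℝ (Fin n) → M := fun p => (e.symm p : M) with hφ
  have hφc : Continuous φ := continuous_subtype_val.comp e.symm.continuous
  have hφo : IsOpenMap φ := (hWo.isOpenMap_subtype_val).comp e.symm.isOpenMap
  set O : Set M := interior T ∩ W with hO
  have hOx : x ∈ O := ⟨mem_interior_iff_mem_nhds.mpr hT, hxW⟩
  have hOo : IsOpen O := isOpen_interior.inter hWo
  set c := e ⟨x, hxW⟩ with hc
  have hφcx : φ c = x := by simp [hφ, hc]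
  have hS : IsOpen (φ ⁻¹' O) := hOo.preimage hφc
  have hcS : c ∈ φ ⁻¹' O := by rw [mem_preimage, hφcx]; exact hOx
  obtain ⟨ε, hε, hball⟩ := Metric.isOpen_iff.mp hS c hcS
  have hsub : closedBall c (ε / 2) ⊆ φ ⁻¹' O :=
    (closedBall_subset_ball (by linarith)).trans hball
  refine ⟨φ '' closedBall c (ε / 2), φ '' ball c (ε / 2),
    (isCompact_closedBall c (ε / 2)).image hφc, ?_, hφo _ isOpen_ball,
    ⟨c, mem_ball_self (by linarith), hφcx⟩,
    ((convex_ball c (ε / 2)).isConnected ⟨c, mem_ball_self (by linarith)⟩).image φ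
      hφc.continuousOn,
    image_mono ball_subset_closedBall⟩
  rintro _ ⟨p, hp, rfl⟩
  exact interior_subset (hsub hp).1

lemma IsTopNManifold.locallyConnectedSpace {n : ℕ} {M : Type*} [TopologicalSpace M]
    (hM : IsTopNManifold n M) : LocallyConnectedSpace M := by
  refine locallyConnectedSpace_iff_subsets_isOpen_isConnected.mpr fun x U hU => ?_
  obtain ⟨K, V, _, hKT, hVo, hxV, hVc, hVK⟩ := hM.exists_compact_connected_nbhd x hU
  exact ⟨V, (hVK.trans hKT), hVo, hxV, hVc⟩

/-- **Existence of precompact normal neighborhoods.**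
If `f : M → N` is a branched cover between connected metric topological `n`-manifolds,
then for every `x ∈ M` there is `r_x > 0` such that for all `0 < r < r_x` the set
`U_f(x, r)` is a precompact normal neighborhood of `x`: its closure is compact,
`f(∂U_f(x,r)) = ∂(f(U_f(x,r)))`, and `U_f(x,r) ∩ f⁻¹{f(x)} = {x}`. -/
theorem exists_precompact_normal_neighborhood {n : ℕ} (hn : 1 ≤ n)
    {M N : Type*} [MetricSpace M] [MetricSpace N]
    [SecondCountableTopology M] [SecondCountableTopology N]
    [ConnectedSpace M] [ConnectedSpace N]
    (hM : IsTopNManifold n M) (hN : IsTopNManifold n N)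
    {f : M → N} (hf : IsBranchedCover f) (x : M) :
    ∃ rx > (0 : ℝ), ∀ r : ℝ, 0 < r → r < rx →
      IsCompact (closure (normalComp f x r)) ∧
      f '' frontier (normalComp f x r) = frontier (f '' normalComp f x r) ∧
      normalComp f x r ∩ f ⁻¹' {f x} = {x} := by
  haveI : LocallyConnectedSpace M := hM.locallyConnectedSpace
  obtain ⟨hfc, hfo, hdisc⟩ := hf
  -- isolate `x` in its fiber
  have h1 := hdisc (f x) x
  rw [accPt_iff_nhds] at h1
  push_neg at h1
  obtain ⟨T, hT, hTx⟩ := h1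
  -- compact neighborhood `K ⊆ T` of `x`
  obtain ⟨K, V, hKcomp, hKT, hVo, hxV, _, hVK⟩ := hM.exists_compact_connected_nbhd x hT
  have hKcl : IsClosed K := hKcomp.isClosed
  have hKfib : ∀ z ∈ K, f z = f x → z = x := fun z hz hfz => hTx z ⟨hKT hz, hfz⟩
  have hxint : x ∈ interior K := interior_maximal hVK hVo hxV
  have hfrK : frontier K ⊆ K := fun z hz => hKcl.closure_eq ▸ frontier_subset_closure hz
  have hfrKcomp : IsCompact (frontier K) :=
    hKcomp.of_isClosed_subset isClosed_frontier hfrK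
  have hxnotfr : x ∉ frontier K := fun h => h.2 hxint
  -- a positive lower bound for distances from `f x` to `f (frontier K)`
  obtain ⟨rx, hrx, hrxlb⟩ :
      ∃ rx > (0 : ℝ), ∀ z ∈ frontier K, rx ≤ dist (f z) (f x) := by
    by_cases hfr : (f '' frontier K).Nonempty
    · have himc : IsCompact (f '' frontier K) := hfrKcomp.image hfc
      have hnm : f x ∉ f '' frontier K := by
        rintro ⟨z, hz, hfz⟩
        exact hxnotfr ((hKfib z (hfrK hz) hfz) ▸ hz)
      have hpos : 0 < infDist (f x) (f '' frontier K) :=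
        (himc.isClosed.notMem_iff_infDist_pos hfr).1 hnm
      refine ⟨_, hpos, fun z hz => ?_⟩
      rw [dist_comm]
      exact infDist_le_dist_of_mem (mem_image_of_mem f hz)
    · exact ⟨1, one_pos, fun z hz => absurd ⟨f z, mem_image_of_mem f hz⟩ hfr⟩
  refine ⟨rx, hrx, fun r hr hrrx => ?_⟩
  set B : Set N := Metric.ball (f x) r with hB
  set P : Set M := f ⁻¹' B with hP
  set U : Set M := normalComp f x r with hU
  have hUdef : U = connectedComponentIn P x := rfl
  have hPo : IsOpen P := isOpen_ball.preimage hfc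
  have hxP : x ∈ P := by rw [hP, mem_preimage, hB]; exact mem_ball_self hr
  have hUo : IsOpen U := hPo.connectedComponentIn
  have hxU : x ∈ U := mem_connectedComponentIn hxP
  have hUP : U ⊆ P := connectedComponentIn_subset _ _
  have hUfr : ∀ z ∈ U, z ∉ frontier K := by
    intro z hz hzfr
    have h1 : dist (f z) (f x) < r := by
      have := hUP hz
      rw [hP, mem_preimage, hB, mem_ball] at this
      exact this
    have h2 := hrxlb z hzfr
    linarith
  -- `U` lies in the interior of `K`
  have hUK : U ⊆ interior K := by
    have hpre : IsPreconnected U := isPreconnected_connectedComponentIn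
    refine hpre.subset_left_of_subset_union isOpen_interior hKcl.isOpen_compl
      (disjoint_compl_right.mono_left interior_subset) ?_ ⟨x, hxU, hxint⟩
    intro z hz
    by_cases hzK : z ∈ K
    · left
      by_contra hzint
      exact hUfr z hz ⟨subset_closure hzK, hzint⟩
    · exact Or.inr hzK
  have hclU : closure U ⊆ K := hKcl.closure_subset_iff.mpr (hUK.trans interior_subset)
  have hcomp : IsCompact (closure U) := hKcomp.of_isClosed_subset isClosed_closure hclU
  -- `U` is relatively closed in `P`
  have hrel : closure U ∩ P ⊆ U := by
    rintro z ⟨hz1, hz2⟩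
    have hzc : z ∈ connectedComponentIn P z := mem_connectedComponentIn hz2
    have hopen : IsOpen (connectedComponentIn P z) := hPo.connectedComponentIn
    obtain ⟨w, hw1, hw2⟩ : (connectedComponentIn P z ∩ U).Nonempty :=
      mem_closure_iff.mp hz1 _ hopen hzc
    have e1 : connectedComponentIn P z = connectedComponentIn P w :=
      connectedComponentIn_eq hw1
    have e2 : connectedComponentIn P x = connectedComponentIn P w :=
      connectedComponentIn_eq hw2
    rw [hUdef, e2, ← e1]
    exact hzc
  have hfrB : ∀ z ∈ frontier U, f z ∉ B := by
    intro z hz hzB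
    rw [hUo.frontier_eq] at hz
    exact hz.2 (hrel ⟨hz.1, hzB⟩)
  have hfU_sub : f '' U ⊆ B := image_subset_iff.mpr hUP
  have hfUo : IsOpen (f '' U) := hfo U hUo
  have hcc : IsCompact (f '' closure U) := hcomp.image hfc
  have hclim : closure (f '' U) ⊆ f '' closure U :=
    closure_minimal (image_mono subset_closure) hcc.isClosed
  refine ⟨hcomp, ?_, ?_⟩
  · -- normality: f(∂U) = ∂(f(U))
    ext y
    rw [hfUo.frontier_eq]
    constructor
    · rintro ⟨z, hz, rfl⟩
      refine ⟨?_, fun hmem => hfrB z hz (hfU_sub hmem)⟩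
      have : z ∈ closure U := hUo.frontier_eq ▸ hz |>.1
      exact (image_closure_subset_closure_image hfc) (mem_image_of_mem f this)
    · rintro ⟨hy1, hy2⟩
      obtain ⟨z, hzcl, rfl⟩ := hclim hy1
      refine ⟨z, ?_, rfl⟩
      rw [hUo.frontier_eq]
      exact ⟨hzcl, fun hzU => hy2 (mem_image_of_mem f hzU)⟩
  · -- U ∩ f⁻¹{f x} = {x}
    apply subset_antisymm
    · rintro z ⟨hzU, hzf⟩
      have : z ∈ K := interior_subset (hUK hzU)
      exact hKfib z this (by simpa using hzf)
    · rintro z rfl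
      exact ⟨hxU, rfl⟩
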